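/- Let 𝒞 be the family of all Borel subsets of the unit interval [0,1] and let μ be a probability measure on [0,1] that is absolutely continuous with respect to Lebesgue measure. Then 𝒞 is not finitely approximable with respect to μ. -/

import Mathlib

open MeasureTheory Set Filter

/-- `𝒞` shatters the finite set `D` if every subset of `D` is cut out by some `C ∈ 𝒞`. -/
def Shatters {X : Type*} (𝒞 : Set (Set X)) (D : Finset X) : Prop :=
  ∀ B ⊆ D, ∃ C ∈ 𝒞, ∀ x ∈ D, x ∈ C ↔ x ∈ B

/-- `𝒞` has finite VC dimension: the cardinalities of shattered finite sets are bounded. -/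
def FiniteVC {X : Type*} (𝒞 : Set (Set X)) : Prop :=
  ∃ k : ℕ, ∀ D : Finset X, Shatters 𝒞 D → D.card ≤ k

/-- `π` is a finite measurable partition of the whole space. -/
def IsFinitePartition {X : Type*} [MeasurableSpace X] (π : Set (Set X)) : Prop :=
  π.Finite ∧ (∀ A ∈ π, MeasurableSet A) ∧
    (∀ A ∈ π, ∀ B ∈ π, A ≠ B → Disjoint A B) ∧ ⋃₀ π = Set.univ

/-- The `π`-boundary of `C`: union of the cells of `π` meeting both `C` and `Cᶜ`
with positive measure. -/
def piBoundary {X : Type*} [MeasurableSpace X] (μ : Measure X) (π : Set (Set X))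
    (C : Set X) : Set X :=
  ⋃₀ {A ∈ π | 0 < μ (A ∩ C) * μ (A ∩ Cᶜ)}

/-- `𝒞` is finitely approximable w.r.t. `μ`: for every `ε > 0` there is a finite measurable
partition `π` such that `μ (∂(C : π)) ≤ ε` for every `C ∈ 𝒞`. -/
def FinitelyApproximable {X : Type*} [MeasurableSpace X] (μ : Measure X)
    (𝒞 : Set (Set X)) : Prop :=
  ∀ ε : ENNReal, 0 < ε → ∃ π : Set (Set X), IsFinitePartition π ∧
    ∀ C ∈ 𝒞, μ (piBoundary μ π C) ≤ ε

/-- If `μ` is a probability measure on `[0,1]` absolutely continuous with respect to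
Lebesgue measure, then the family of all Borel subsets of `[0,1]` is not finitely
approximable with respect to `μ`. -/

lemma split_lemma (μ : Measure (Set.Icc (0:ℝ) 1)) [IsProbabilityMeasure μ] [NullSingletonClass μ]
    {A : Set (Set.Icc (0:ℝ) 1)} (hA : MeasurableSet A) (hpos : 0 < μ A) :
    ∃ B : Set (Set.Icc (0:ℝ) 1), MeasurableSet B ∧ B ⊆ A ∧ 0 < μ B ∧ 0 < μ (A ∩ Bᶜ) := by
  set S1 : Set ℝ := {t : ℝ | 0 < μ (A ∩ {x : Set.Icc (0:ℝ) 1 | (x:ℝ) ≤ t})} with hS1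
  set S2 : Set ℝ := {t : ℝ | 0 < μ (A ∩ {x : Set.Icc (0:ℝ) 1 | t < (x:ℝ)})} with hS2
  have hS1ne : S1.Nonempty := by
    refine ⟨1, ?_⟩
    have h1 : A ∩ {x : Set.Icc (0:ℝ) 1 | (x:ℝ) ≤ 1} = A := by
      ext x; exact ⟨fun h => h.1, fun h => ⟨h, x.2.2⟩⟩
    simpa only [hS1, mem_setOf_eq, h1] using hpos
  have hS2ne : S2.Nonempty := by
    refine ⟨-1, ?_⟩
    have h1 : A ∩ {x : Set.Icc (0:ℝ) 1 | (-1:ℝ) < (x:ℝ)} = A := by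
      ext x; exact ⟨fun h => h.1, fun h => ⟨h, show (-1:ℝ) < (x:ℝ) by linarith [x.2.1]⟩⟩
    simpa only [hS2, mem_setOf_eq, h1] using hpos
  have hS1bdd : BddBelow S1 := by
    refine ⟨0, fun t ht => ?_⟩
    by_contra h
    push_neg at h
    have h1 : A ∩ {x : Set.Icc (0:ℝ) 1 | (x:ℝ) ≤ t} = ∅ := by
      ext x; simp only [mem_inter_iff, mem_setOf_eq, mem_empty_iff_false, iff_false]
      rintro ⟨-, hx⟩; linarith [x.2.1]
    rw [hS1] at ht
    simp only [mem_setOf_eq, h1, measure_empty, lt_self_iff_false] at ht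
  have hS2bdd : BddAbove S2 := by
    refine ⟨1, fun t ht => ?_⟩
    by_contra h
    push_neg at h
    have h1 : A ∩ {x : Set.Icc (0:ℝ) 1 | t < (x:ℝ)} = ∅ := by
      ext x; simp only [mem_inter_iff, mem_setOf_eq, mem_empty_iff_false, iff_false]
      rintro ⟨-, hx⟩; linarith [x.2.2]
    rw [hS2] at ht
    simp only [mem_setOf_eq, h1, measure_empty, lt_self_iff_false] at ht
  have hlow : μ (A ∩ {x : Set.Icc (0:ℝ) 1 | (x:ℝ) < sInf S1}) = 0 := by
    have hsub : (A ∩ {x : Set.Icc (0:ℝ) 1 | (x:ℝ) < sInf S1}) ⊆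
        ⋃ n : ℕ, (A ∩ {x : Set.Icc (0:ℝ) 1 | (x:ℝ) ≤ sInf S1 - 1/((n:ℝ)+1)}) := by
      rintro x ⟨hxA, hx⟩
      obtain ⟨n, hn⟩ := exists_nat_one_div_lt (show (0:ℝ) < sInf S1 - (x:ℝ) from by
        simp only [mem_setOf_eq] at hx; linarith)
      exact mem_iUnion.2 ⟨n, hxA, by simp only [mem_setOf_eq]; linarith⟩
    refine measure_mono_null hsub (measure_iUnion_null fun n => ?_)
    have hnot : (sInf S1 - 1/((n:ℝ)+1)) ∉ S1 := by
      refine notMem_of_lt_csInf ?_ hS1bdd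
      have h2 : (0:ℝ) < 1/((n:ℝ)+1) := by positivity
      linarith
    exact nonpos_iff_eq_zero.1 (not_lt.1 hnot)
  have hhigh : μ (A ∩ {x : Set.Icc (0:ℝ) 1 | sSup S2 < (x:ℝ)}) = 0 := by
    have hsub : (A ∩ {x : Set.Icc (0:ℝ) 1 | sSup S2 < (x:ℝ)}) ⊆
        ⋃ n : ℕ, (A ∩ {x : Set.Icc (0:ℝ) 1 | sSup S2 + 1/((n:ℝ)+1) < (x:ℝ)}) := by
      rintro x ⟨hxA, hx⟩
      obtain ⟨n, hn⟩ := exists_nat_one_div_lt (show (0:ℝ) < (x:ℝ) - sSup S2 from by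
        simp only [mem_setOf_eq] at hx; linarith)
      exact mem_iUnion.2 ⟨n, hxA, by simp only [mem_setOf_eq]; linarith⟩
    refine measure_mono_null hsub (measure_iUnion_null fun n => ?_)
    have hnot : (sSup S2 + 1/((n:ℝ)+1)) ∉ S2 := by
      refine notMem_of_csSup_lt ?_ hS2bdd
      have h2 : (0:ℝ) < 1/((n:ℝ)+1) := by positivity
      linarith
    exact nonpos_iff_eq_zero.1 (not_lt.1 hnot)
  have hmid : ∀ t : ℝ, μ {x : Set.Icc (0:ℝ) 1 | (x:ℝ) = t} = 0 := by
    intro t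
    refine Set.Subsingleton.measure_zero (fun a ha b hb => Subtype.ext (ha.trans hb.symm)) μ
  have hlt : sInf S1 < sSup S2 := by
    by_contra h
    push_neg at h
    have hcover : A ⊆ (A ∩ {x : Set.Icc (0:ℝ) 1 | (x:ℝ) < sInf S1}) ∪
        ({x : Set.Icc (0:ℝ) 1 | (x:ℝ) = sInf S1} ∪
          (A ∩ {x : Set.Icc (0:ℝ) 1 | sSup S2 < (x:ℝ)})) := by
      intro x hx
      rcases lt_trichotomy (x:ℝ) (sInf S1) with h1 | h1 | h1
      · exact Or.inl ⟨hx, h1⟩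
      · exact Or.inr (Or.inl h1)
      · exact Or.inr (Or.inr ⟨hx, lt_of_le_of_lt h h1⟩)
    have h0 : μ A = 0 :=
      measure_mono_null hcover
        (measure_union_null hlow (measure_union_null (hmid _) hhigh))
    exact absurd h0 hpos.ne'
  refine ⟨A ∩ {x : Set.Icc (0:ℝ) 1 | (x:ℝ) ≤ (sInf S1 + sSup S2)/2},
    hA.inter (measurableSet_le measurable_subtype_coe measurable_const),
    inter_subset_left, ?_, ?_⟩
  · obtain ⟨s, hsS, hst⟩ := exists_lt_of_csInf_lt hS1ne
      (show sInf S1 < (sInf S1 + sSup S2)/2 by linarith)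
    rw [hS1] at hsS
    simp only [mem_setOf_eq] at hsS
    refine lt_of_lt_of_le hsS (measure_mono (inter_subset_inter_right _ ?_))
    intro x hx
    simp only [mem_setOf_eq] at hx ⊢
    linarith
  · obtain ⟨s, hsS, hst⟩ := exists_lt_of_lt_csSup hS2ne
      (show (sInf S1 + sSup S2)/2 < sSup S2 by linarith)
    rw [hS2] at hsS
    simp only [mem_setOf_eq] at hsS
    have heq : A ∩ (A ∩ {x : Set.Icc (0:ℝ) 1 | (x:ℝ) ≤ (sInf S1 + sSup S2)/2})ᶜ =
        A ∩ {x : Set.Icc (0:ℝ) 1 | (sInf S1 + sSup S2)/2 < (x:ℝ)} := by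
      ext x
      simp only [mem_inter_iff, mem_compl_iff, mem_setOf_eq, not_and, not_le]
      tauto
    rw [heq]
    refine lt_of_lt_of_le hsS (measure_mono (inter_subset_inter_right _ ?_))
    intro x hx
    simp only [mem_setOf_eq] at hx ⊢
    linarith

theorem borel_not_finitelyApproximable_of_absolutelyContinuous
    (μ : Measure (Set.Icc (0 : ℝ) 1)) [IsProbabilityMeasure μ]
    (habs : μ ≪ Measure.comap (Subtype.val : Set.Icc (0 : ℝ) 1 → ℝ) volume) :
    ¬ FinitelyApproximable μ {C : Set (Set.Icc (0 : ℝ) 1) | MeasurableSet C} := by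
  have hemb : MeasurableEmbedding (Subtype.val : Set.Icc (0 : ℝ) 1 → ℝ) :=
    MeasurableEmbedding.subtype_coe measurableSet_Icc
  haveI : NullSingletonClass μ := by
    refine ⟨fun x => ?_⟩
    apply habs
    rw [Measure.comap_apply _ Subtype.val_injective
      (fun s hs => hemb.measurableSet_image.2 hs) _ (measurableSet_singleton x)]
    simp
  intro h
  obtain ⟨π, ⟨hfin, hmeas, hdisj, hcover⟩, hbd⟩ := h (1/2) (by norm_num)
  -- choose a splitting subset for each cell
  have hch : ∀ A : Set (Set.Icc (0:ℝ) 1), ∃ B : Set (Set.Icc (0:ℝ) 1),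
      MeasurableSet B ∧ B ⊆ A ∧
        (MeasurableSet A → 0 < μ A → 0 < μ B ∧ 0 < μ (A ∩ Bᶜ)) := by
    intro A
    by_cases h1 : MeasurableSet A ∧ 0 < μ A
    · obtain ⟨B, hB, hBA, hp1, hp2⟩ := split_lemma μ h1.1 h1.2
      exact ⟨B, hB, hBA, fun _ _ => ⟨hp1, hp2⟩⟩
    · exact ⟨∅, MeasurableSet.empty, empty_subset _, fun hm hp => absurd ⟨hm, hp⟩ h1⟩
  choose f hf1 hf2 hf3 using hch
  set C : Set (Set.Icc (0:ℝ) 1) := ⋃₀ (f '' π) with hC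
  have hCmeas : MeasurableSet C := by
    refine Set.Finite.measurableSet_sUnion (hfin.image f) ?_
    rintro - ⟨A, hA, rfl⟩
    exact hf1 A
  have hkey := hbd C hCmeas
  -- every positive-measure cell lies in the boundary
  have hsubbd : ⋃₀ {A ∈ π | 0 < μ A} ⊆ piBoundary μ π C := by
    refine sUnion_subset_sUnion ?_
    rintro A ⟨hAπ, hApos⟩
    refine ⟨hAπ, ?_⟩
    have hAC : A ∩ C = f A := by
      apply Subset.antisymm
      · rintro x ⟨hxA, hxC⟩
        obtain ⟨-, ⟨A', hA', rfl⟩, hxB⟩ := hxC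
        by_cases hAA' : A = A'
        · exact hAA' ▸ hxB
        · exact absurd (hf2 A' hxB) (Set.disjoint_left.1 (hdisj A hAπ A' hA' hAA') hxA)
      · intro x hx
        exact ⟨hf2 A hx, ⟨f A, ⟨A, hAπ, rfl⟩, hx⟩⟩
    have hACc : A ∩ Cᶜ = A ∩ (f A)ᶜ := by
      ext x
      simp only [mem_inter_iff, mem_compl_iff]
      constructor
      · rintro ⟨hxA, hxC⟩
        exact ⟨hxA, fun hxB => hxC ⟨f A, ⟨A, hAπ, rfl⟩, hxB⟩⟩
      · rintro ⟨hxA, hxB⟩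
        refine ⟨hxA, fun hxC => hxB ?_⟩
        have : x ∈ A ∩ C := ⟨hxA, hxC⟩
        rwa [hAC] at this
    obtain ⟨hp1, hp2⟩ := hf3 A (hmeas A hAπ) hApos
    rw [hAC, hACc]
    exact ENNReal.mul_pos hp1.ne' hp2.ne'
  -- null cells contribute nothing
  have hnul : μ (⋃₀ {A ∈ π | μ A = 0}) = 0 := by
    rw [sUnion_eq_biUnion]
    refine (measure_biUnion_null_iff ((hfin.subset (sep_subset _ _)).countable)).2 ?_
    rintro A ⟨-, hA0⟩
    exact hA0
  have hone : (1 : ENNReal) ≤ μ (⋃₀ {A ∈ π | 0 < μ A}) := by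
    have hsplit : ⋃₀ π ⊆ ⋃₀ {A ∈ π | 0 < μ A} ∪ ⋃₀ {A ∈ π | μ A = 0} := by
      rintro x ⟨A, hAπ, hxA⟩
      rcases eq_or_ne (μ A) 0 with h0 | h0
      · exact Or.inr ⟨A, ⟨hAπ, h0⟩, hxA⟩
      · exact Or.inl ⟨A, ⟨hAπ, pos_iff_ne_zero.2 h0⟩, hxA⟩
    calc (1 : ENNReal) = μ univ := (measure_univ).symm
    _ = μ (⋃₀ π) := by rw [hcover]
    _ ≤ μ (⋃₀ {A ∈ π | 0 < μ A} ∪ ⋃₀ {A ∈ π | μ A = 0}) := measure_mono hsplit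
    _ ≤ μ (⋃₀ {A ∈ π | 0 < μ A}) + μ (⋃₀ {A ∈ π | μ A = 0}) := measure_union_le _ _
    _ = μ (⋃₀ {A ∈ π | 0 < μ A}) := by rw [hnul, add_zero]
  have : (1 : ENNReal) ≤ 1/2 := le_trans hone (le_trans (measure_mono hsubbd) hkey)
  norm_num at this
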